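/- Let B be a Frolov matrix in dimension d (invertible; |∏_j(Bm)_j| ≥ 1 for all m ∈ ℤ^d\{0}; every axis-parallel box of volume V contains at most V+1 lattice points Bm). For r ∈ ℕ and h_r(x) = ∏_{j=1}^d Σ_{k=0}^r |2πx_j|^{2k}, there is a constant c = c(r,d,B) such that for all n ≥ 2 and all u ∈ [1,2^{1/d}]^d: Σ_{m ∈ ℤ^d \ {0}} h_r(n^{1/d} û B m)^{−1} ≤ c · n^{−2r} (log n)^{d−1}. -/

import Mathlib

open Matrix Set
open scoped ENNReal

noncomputable section

/-- The weight function `h_r`. -/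
def hrw {d : ℕ} (r : ℕ) (x : Fin d → ℝ) : ℝ :=
  ∏ j, ∑ k ∈ Finset.range (r + 1), |2 * Real.pi * x j| ^ (2 * k)

lemma aux_regroup {M B : Type*} (φ : M → B) (f : M → ℝ≥0∞) :
    ∑' m, f m = ∑' b : B, ∑' p : {m // φ m = b}, f p.1 := by
  rw [← (Equiv.sigmaFiberEquiv φ).tsum_eq (f := f), ENNReal.tsum_sigma']
  rfl

lemma aux_tsum_const {α : Type*} [Finite α] (c : ℝ≥0∞) :
    ∑' _ : α, c = (Nat.card α : ℝ≥0∞) * c := by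
  have := Fintype.ofFinite α
  rw [tsum_eq_sum (s := Finset.univ) (fun b hb => absurd (Finset.mem_univ b) hb),
    Finset.sum_const, Nat.card_eq_fintype_card, ← Finset.card_univ, nsmul_eq_mul]

lemma aux_tsum_le {α : Type*} {β : Type*} [Finite β] (f : α → ℝ≥0∞) (C : ℝ≥0∞)
    (g : α → β) (hg : Function.Injective g) (hf : ∀ a, f a ≤ C) :
    ∑' a, f a ≤ (Nat.card β : ℝ≥0∞) * C := by
  have : Finite α := Finite.of_injective g hg
  calc ∑' a, f a ≤ ∑' _ : α, C := ENNReal.tsum_le_tsum hf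
  _ = (Nat.card α : ℝ≥0∞) * C := aux_tsum_const C
  _ ≤ _ := mul_le_mul_left (Nat.cast_le.2 (Nat.card_le_card_of_injective g hg)) C

lemma aux_card_simplex (d s : ℕ) (hd : 0 < d) :
    Nat.card {β : Fin d → ℕ // ∑ j, β j = s} ≤ (s+1)^(d-1) := by
  set j₀ : Fin d := ⟨0, hd⟩
  have hF : ∀ b : {β : Fin d → ℕ // ∑ j, β j = s}, ∀ j : Fin d, b.1 j < s + 1 := by
    intro b j
    have := Finset.single_le_sum (f := b.1) (fun k _ => Nat.zero_le _) (Finset.mem_univ j)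
    omega
  set F : {β : Fin d → ℕ // ∑ j, β j = s} → ({j : Fin d // j ≠ j₀} → Fin (s+1)) :=
    fun b j => ⟨b.1 j.1, hF b j.1⟩ with hFdef
  have hinj : Function.Injective F := by
    intro b b' h
    have hco : ∀ j : Fin d, j ≠ j₀ → b.1 j = b'.1 j := by
      intro j hj
      have := congrFun h ⟨j, hj⟩
      simpa [hFdef, Fin.ext_iff] using this
    have hsum : ∑ j ∈ Finset.univ.erase j₀, b.1 j = ∑ j ∈ Finset.univ.erase j₀, b'.1 j :=
      Finset.sum_congr rfl (fun j hj => hco j (Finset.mem_erase.1 hj).1)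
    have h1 := b.2
    have h2 := b'.2
    rw [← Finset.add_sum_erase _ _ (Finset.mem_univ j₀)] at h1 h2
    apply Subtype.ext
    funext j
    by_cases hj : j = j₀
    · subst hj; omega
    · exact hco j hj
  calc Nat.card {β : Fin d → ℕ // ∑ j, β j = s}
      ≤ Nat.card ({j : Fin d // j ≠ j₀} → Fin (s+1)) := Nat.card_le_card_of_injective F hinj
  _ = (s+1)^(d-1) := by
      rw [Nat.card_eq_fintype_card, Fintype.card_fun, Fintype.card_fin]
      congr 1
      rw [Fintype.card_subtype_compl, Fintype.card_subtype_eq, Fintype.card_fin]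

lemma aux_finite_simplex (d s : ℕ) : Finite {β : Fin d → ℕ // ∑ j, β j = s} := by
  apply Finite.of_injective (β := Fin d → Fin (s+1)) (fun b j => ⟨b.1 j, by
    have := Finset.single_le_sum (f := b.1) (fun k _ => Nat.zero_le _) (Finset.mem_univ j)
    omega⟩)
  intro b b' h
  apply Subtype.ext
  funext j
  have := congrFun h j
  simpa [Fin.ext_iff] using this

lemma aux_tsum_card {α : Type*} [Finite α] (f : α → ℝ≥0∞) (C : ℝ≥0∞) (N : ℕ)
    (hcard : Nat.card α ≤ N) (hf : ∀ x, f x ≤ C) : ∑' x, f x ≤ (N : ℝ≥0∞) * C := by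
  calc ∑' x, f x ≤ ∑' _ : α, C := ENNReal.tsum_le_tsum hf
  _ = (Nat.card α : ℝ≥0∞) * C := aux_tsum_const C
  _ ≤ _ := mul_le_mul_left (Nat.cast_le.2 hcard) C

lemma hrw_ge {d : ℕ} (r : ℕ) (x : Fin d → ℝ) :
    (∏ j, max 1 |x j|) ^ (2*r) ≤ hrw r x := by
  rw [← Finset.prod_pow]
  apply Finset.prod_le_prod (fun j _ => by positivity)
  intro j _
  rcases le_total |x j| 1 with h | h
  · rw [max_eq_left h]
    calc (1:ℝ)^(2*r) = |2 * Real.pi * x j| ^ (2*0) := by norm_num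
    _ ≤ _ := Finset.single_le_sum (f := fun k => |2 * Real.pi * x j| ^ (2*k))
        (fun k _ => by positivity) (Finset.mem_range.2 (by omega))
  · rw [max_eq_right h]
    calc |x j|^(2*r) ≤ |2 * Real.pi * x j| ^ (2*r) := by
          apply pow_le_pow_left₀ (abs_nonneg _)
          rw [abs_mul]
          have h1 : (1:ℝ) ≤ |2 * Real.pi| := by
            rw [abs_of_pos (by positivity)]
            nlinarith [Real.pi_gt_three]
          nlinarith [abs_nonneg (x j)]
    _ ≤ _ := Finset.single_le_sum (f := fun k => |2 * Real.pi * x j| ^ (2*k))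
        (fun k _ => by positivity) (Finset.mem_range.2 (by omega))

lemma one_le_prod_max {d : ℕ} (x : Fin d → ℝ) : (1:ℝ) ≤ ∏ j, max 1 |x j| := by
  calc (1:ℝ) = ∏ _j : Fin d, 1 := by simp
  _ ≤ _ := Finset.prod_le_prod (by norm_num) (fun j _ => le_max_left _ _)

set_option maxHeartbeats 2000000 in
/-- For a Frolov matrix `B`: `Σ_{m≠0} h_r(n^{1/d} û B m)^{−1} ≤ c n^{−2r} (log n)^{d−1}`. -/
theorem stmt5 {d : ℕ} (r : ℕ) (hr1 : 1 ≤ r) (hd : 0 < d)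
    (B : Matrix (Fin d) (Fin d) ℝ) (hdet : B.det ≠ 0)
    (hb : ∀ m : Fin d → ℤ, m ≠ 0 → 1 ≤ |∏ j, (B *ᵥ fun k => (m k : ℝ)) j|)
    (hbox : ∀ x y : Fin d → ℝ,
      {m : Fin d → ℤ | ∀ j, (B *ᵥ fun k => (m k : ℝ)) j ∈ Set.uIcc (x j) (y j)}.encard
        ≤ ENNReal.ofReal (∏ j, |x j - y j|) + 1) :
    ∃ c > (0 : ℝ), ∀ n : ℕ, 2 ≤ n →
      ∀ u ∈ Set.Icc (1 : Fin d → ℝ) (fun _ => (2 : ℝ) ^ ((1 : ℝ) / d)),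
        (∑' m : {m : Fin d → ℤ // m ≠ 0},
            ENNReal.ofReal
              ((hrw r (fun j => (n : ℝ) ^ ((1 : ℝ) / d) * u j *
                  (B *ᵥ fun k => (m.1 k : ℝ)) j))⁻¹))
          ≤ ENNReal.ofReal (c * (n : ℝ) ^ (-(2 : ℝ) * r) * Real.log n ^ (d - 1)) := by
  classical
  -- the summable geometric-type kernel
  have hsumK : Summable (fun t : ℕ => ((t:ℝ)+1)^(d-1) * (1/2:ℝ)^t) := by
    have h := summable_pow_mul_geometric_of_norm_lt_one (R := ℝ) (d-1)
      (r := (1/2:ℝ)) (by norm_num)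
    have h2 := (h.comp_injective Nat.succ_injective).mul_right 2
    apply h2.congr
    intro t
    simp only [Function.comp_apply, Nat.succ_eq_add_one]
    push_cast
    ring
  set Kr : ℝ := ∑' t:ℕ, ((t:ℝ)+1)^(d-1) * (1/2:ℝ)^t with hKrdef
  have hKr0 : 0 ≤ Kr := tsum_nonneg (fun t => by positivity)
  set c0 : ℝ := (3 / Real.log 2)^(d-1) * 2^(d+2+2*r*d) * Kr with hc0
  have hc00 : 0 ≤ c0 := by
    exact mul_nonneg (mul_nonneg (by positivity) (by positivity)) hKr0
  refine ⟨c0 + 1, by linarith, ?_⟩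
  intro n hn u hu
  have hn2 : (2:ℝ) ≤ (n:ℝ) := by exact_mod_cast hn
  have hn0 : (0:ℝ) < n := by linarith
  set s₀ : ℕ := Nat.clog 2 n with hs₀def
  have hs₀pos : 0 < s₀ := Nat.clog_pos one_lt_two hn
  have hnpow : (n:ℝ) ≤ 2^s₀ := by
    exact_mod_cast Nat.cast_le.2 (Nat.le_pow_clog one_lt_two n)
  -- the scaling vector
  set a : Fin d → ℝ := fun j => (n : ℝ) ^ ((1 : ℝ)/d) * u j with hadef
  have ha1 : ∀ j, 1 ≤ a j := by
    intro j
    have h1 : (1:ℝ) ≤ (n : ℝ) ^ ((1 : ℝ)/d) := by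
      apply Real.one_le_rpow (by linarith) (by positivity)
    have h2 : 1 ≤ u j := hu.1 j
    calc (1:ℝ) = 1 * 1 := by ring
    _ ≤ _ := mul_le_mul h1 h2 zero_le_one (by linarith)
  have hapos : ∀ j, 0 < a j := fun j => lt_of_lt_of_le one_pos (ha1 j)
  have hu1 : (1:ℝ) ≤ ∏ j, u j := by
    calc (1:ℝ) = ∏ _j : Fin d, 1 := by simp
    _ ≤ _ := Finset.prod_le_prod (by norm_num) (fun j _ => hu.1 j)
  have haprod : (n:ℝ) ≤ ∏ j, a j := by
    have hsplit : ∏ j, a j = (∏ _j : Fin d, (n:ℝ)^((1:ℝ)/d)) * ∏ j, u j := by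
      rw [← Finset.prod_mul_distrib]
    have hpp : (∏ _j : Fin d, (n:ℝ)^((1:ℝ)/d)) = (n:ℝ) := by
      rw [Finset.prod_const, Finset.card_univ, Fintype.card_fin,
        ← Real.rpow_natCast ((n:ℝ)^((1:ℝ)/d)) d, ← Real.rpow_mul (le_of_lt hn0)]
      rw [show (1:ℝ)/d * d = 1 by field_simp, Real.rpow_one]
    rw [hsplit, hpp]
    nlinarith
  -- lattice point and dyadic data
  set y : {m : Fin d → ℤ // m ≠ 0} → Fin d → ℝ :=
    fun m j => (n : ℝ) ^ ((1 : ℝ)/d) * u j * (B *ᵥ fun k => (m.1 k : ℝ)) j with hydef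
  set φ : {m : Fin d → ℤ // m ≠ 0} → (Fin d → ℕ) :=
    fun m j => Nat.clog 2 ⌈max 1 |y m j|⌉₊ with hφdef
  have hyub : ∀ m j, max 1 |y m j| ≤ 2 ^ φ m j := by
    intro m j
    calc max 1 |y m j| ≤ (⌈max 1 |y m j|⌉₊ : ℝ) := Nat.le_ceil _
    _ ≤ (((2:ℕ) ^ (Nat.clog 2 ⌈max 1 |y m j|⌉₊) : ℕ) : ℝ) :=
        Nat.cast_le.2 (Nat.le_pow_clog one_lt_two _)
    _ = 2 ^ φ m j := by push_cast; rfl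
  have hylb : ∀ m j, (2:ℝ) ^ φ m j ≤ 2 * max 1 |y m j| := by
    intro m j
    have hmax1 : (1:ℝ) ≤ max 1 |y m j| := le_max_left _ _
    by_cases h0 : φ m j = 0
    · rw [h0, pow_zero]; linarith
    · set k := ⌈max 1 |y m j|⌉₊ with hk
      have hk2 : 2 ≤ k := by
        by_contra hlt
        push_neg at hlt
        have hk1 : k ≤ 1 := by omega
        have : φ m j ≤ Nat.clog 2 1 := Nat.clog_mono_right 2 hk1
        simp [Nat.clog_one_right] at this
        exact h0 this
      have hlt : (2:ℕ) ^ (φ m j - 1) < k := Nat.pow_pred_clog_lt_self one_lt_two hk2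
      have hle : (2:ℕ) ^ (φ m j - 1) ≤ k - 1 := by omega
      have hkreal : ((k:ℝ) - 1) < max 1 |y m j| := by
        have h := Nat.ceil_lt_add_one (le_trans zero_le_one hmax1)
        rw [← hk] at h
        linarith
      have hcast : ((2:ℝ)) ^ (φ m j - 1) ≤ (k:ℝ) - 1 := by
        have h' := (Nat.cast_le (α := ℝ)).2 hle
        rw [Nat.cast_pow, Nat.cast_sub (by omega : 1 ≤ k)] at h'
        exact_mod_cast h'
      have hφ1 : φ m j = (φ m j - 1) + 1 := by omega
      rw [hφ1, pow_succ]
      nlinarith [pow_pos (by norm_num : (0:ℝ) < 2) (φ m j - 1)]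
  have hPn : ∀ m, (n:ℝ) ≤ ∏ j, max 1 |y m j| := by
    intro m
    have hXb := hb m.1 m.2
    have h1 : (n:ℝ) ≤ (∏ j, a j) * |∏ j, (B *ᵥ fun k => (m.1 k : ℝ)) j| := by
      calc (n:ℝ) ≤ ∏ j, a j := haprod
      _ = (∏ j, a j) * 1 := (mul_one _).symm
      _ ≤ _ := mul_le_mul_of_nonneg_left hXb
          (le_of_lt (Finset.prod_pos (fun j _ => hapos j)))
    have h2 : (∏ j, a j) * |∏ j, (B *ᵥ fun k => (m.1 k : ℝ)) j| = ∏ j, |y m j| := by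
      rw [Finset.abs_prod, ← Finset.prod_mul_distrib]
      apply Finset.prod_congr rfl
      intro j _
      rw [← abs_of_pos (hapos j), ← abs_mul]
    have h3 : ∏ j, |y m j| ≤ ∏ j, max 1 |y m j| :=
      Finset.prod_le_prod (fun j _ => abs_nonneg _) (fun j _ => le_max_right _ _)
    linarith
  have hPpos : ∀ m, (1:ℝ) ≤ ∏ j, max 1 |y m j| := fun m => one_le_prod_max (y m)
  -- pointwise bound
  set ρR : ℕ → ℝ := fun s => ((2:ℝ)^d)^(2*r) / ((2:ℝ)^s)^(2*r) with hρdef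
  have hρ0 : ∀ s, 0 ≤ ρR s := fun s => by positivity
  have hpoint : ∀ m, (hrw r (y m))⁻¹ ≤ ρR (∑ j, φ m j) := by
    intro m
    have hPlb : (2:ℝ)^(∑ j, φ m j) / 2^d ≤ ∏ j, max 1 |y m j| := by
      have hstep : ∏ j, ((2:ℝ)^(φ m j) / 2) ≤ ∏ j, max 1 |y m j| :=
        Finset.prod_le_prod (fun j _ => by positivity)
          (fun j _ => by have := hylb m j; linarith)
      calc (2:ℝ)^(∑ j, φ m j)/2^d = ∏ j, ((2:ℝ)^(φ m j) / 2) := by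
            rw [Finset.prod_div_distrib, Finset.prod_pow_eq_pow_sum, Finset.prod_const,
              Finset.card_univ, Fintype.card_fin]
      _ ≤ _ := hstep
    have hhrwlb : ((2:ℝ)^(∑ j, φ m j))^(2*r) / ((2:ℝ)^d)^(2*r) ≤ hrw r (y m) := by
      calc ((2:ℝ)^(∑ j, φ m j))^(2*r) / ((2:ℝ)^d)^(2*r)
          = ((2:ℝ)^(∑ j, φ m j) / 2^d)^(2*r) := (div_pow _ _ _).symm
      _ ≤ (∏ j, max 1 |y m j|)^(2*r) := pow_le_pow_left₀ (by positivity) hPlb _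
      _ ≤ hrw r (y m) := hrw_ge r (y m)
    have hq : (0:ℝ) < ((2:ℝ)^(∑ j, φ m j))^(2*r) / ((2:ℝ)^d)^(2*r) := by positivity
    have hinv := inv_anti₀ hq hhrwlb
    rwa [inv_div] at hinv
  -- the per-fiber bound
  set bndR : ℕ → ℝ := fun s =>
    if n ≤ 2^s then ((2:ℝ)^(d+1+s)/n) * ρR s else 0 with hbnddef
  have hbnd0 : ∀ s, 0 ≤ bndR s := by
    intro s
    rw [hbnddef]
    dsimp only
    split
    · positivity
    · exact le_rfl
  have hfiber : ∀ β : Fin d → ℕ,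
      (∑' p : {m : {m : Fin d → ℤ // m ≠ 0} // φ m = β},
          ENNReal.ofReal ((hrw r (y p.1))⁻¹))
        ≤ ENNReal.ofReal (bndR (∑ j, β j)) := by
    intro β
    by_cases hne : Nonempty {m : {m : Fin d → ℤ // m ≠ 0} // φ m = β}
    · obtain ⟨m₀⟩ := hne
      have hyubβ : ∀ p : {m : {m : Fin d → ℤ // m ≠ 0} // φ m = β},
          ∀ j, max 1 |y p.1 j| ≤ (2:ℝ) ^ β j := by
        intro p j
        have h := hyub p.1 j
        rw [p.2] at h
        exact h
      have hcondR : (n:ℝ) ≤ 2 ^ (∑ j, β j) := by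
        calc (n:ℝ) ≤ ∏ j, max 1 |y m₀.1 j| := hPn m₀.1
        _ ≤ ∏ j, (2:ℝ)^(β j) := Finset.prod_le_prod
            (fun j _ => le_trans zero_le_one (le_max_left _ _))
            (fun j _ => hyubβ m₀ j)
        _ = 2^(∑ j, β j) := Finset.prod_pow_eq_pow_sum _ _ _
      have hcond : n ≤ 2 ^ (∑ j, β j) := by
        have : ((n:ℕ):ℝ) ≤ (((2:ℕ)^(∑ j, β j) : ℕ) : ℝ) := by push_cast; exact hcondR
        exact_mod_cast this
      -- the box
      set xv : Fin d → ℝ := fun j => -((2:ℝ)^(β j) / a j) with hxv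
      set yv : Fin d → ℝ := fun j => (2:ℝ)^(β j) / a j with hyv
      have hyvnn : ∀ j, 0 ≤ yv j := fun j => by
        have := hapos j
        rw [hyv]
        positivity
      set S : Set (Fin d → ℤ) :=
        {m : Fin d → ℤ | ∀ j, (B *ᵥ fun k => (m k : ℝ)) j ∈ Set.uIcc (xv j) (yv j)} with hS
      have hboxS := hbox xv yv
      have hSfin : S.Finite := by
        rw [← Set.encard_ne_top_iff]
        intro htop
        rw [htop] at hboxS
        have h1 : (ENNReal.ofReal (∏ j, |xv j - yv j|) + 1) ≠ ⊤ := by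
          simp [ENNReal.ofReal_ne_top]
        rw [ENat.toENNReal_top] at hboxS
        exact h1 (top_le_iff.1 hboxS)
      have : Finite ↥S := hSfin.to_subtype
      have hmem : ∀ p : {m : {m : Fin d → ℤ // m ≠ 0} // φ m = β}, p.1.1 ∈ S := by
        intro p
        intro j
        have h1 : |y p.1 j| ≤ (2:ℝ)^(β j) := le_trans (le_max_right _ _) (hyubβ p j)
        have h2 : |(B *ᵥ fun k => ((p.1.1 k : ℤ) : ℝ)) j| ≤ yv j := by
          rw [hyv]
          rw [le_div_iff₀ (hapos j)]
          calc |(B *ᵥ fun k => ((p.1.1 k : ℤ) : ℝ)) j| * a j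
              = |y p.1 j| := by
                rw [mul_comm, ← abs_of_pos (hapos j), ← abs_mul]
          _ ≤ _ := h1
        rw [Set.uIcc_of_le (le_trans (neg_nonpos.2 (hyvnn j)) (hyvnn j))]
        have h3 := abs_le.1 h2
        exact ⟨h3.1, h3.2⟩
      set G : {m : {m : Fin d → ℤ // m ≠ 0} // φ m = β} → ↥S :=
        fun p => ⟨p.1.1, hmem p⟩ with hG
      have hGinj : Function.Injective G := by
        intro p q h
        have h2 := congrArg Subtype.val h
        exact Subtype.ext (Subtype.ext h2)
      -- cardinality bound
      have hvol : ∏ j, |xv j - yv j| = (2:ℝ)^d * 2^(∑ j, β j) / ∏ j, a j := by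
        have heq : ∀ j, |xv j - yv j| = 2 * ((2:ℝ)^(β j) / a j) := by
          intro j
          have : xv j - yv j = -(2 * ((2:ℝ)^(β j) / a j)) := by rw [hxv, hyv]; ring
          rw [this, abs_neg, abs_of_nonneg (by have := hapos j; positivity)]
        calc ∏ j, |xv j - yv j| = ∏ j, (2 * ((2:ℝ)^(β j) / a j)) :=
              Finset.prod_congr rfl (fun j _ => heq j)
        _ = (2:ℝ)^d * 2^(∑ j, β j) / ∏ j, a j := by
            rw [Finset.prod_mul_distrib, Finset.prod_const, Finset.prod_div_distrib,
              Finset.prod_pow_eq_pow_sum, Finset.card_univ, Fintype.card_fin]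
            ring
      have hvol2 : ∏ j, |xv j - yv j| + 1 ≤ (2:ℝ)^(d+1+∑ j, β j) / n := by
        have h1 : (2:ℝ)^d * 2^(∑ j, β j) / ∏ j, a j ≤ 2^d * 2^(∑ j, β j) / n := by
          apply div_le_div_of_nonneg_left (by positivity) hn0 haprod
        have hv1 : ∏ j, |xv j - yv j| ≤ 2^d * 2^(∑ j, β j) / n := hvol.le.trans h1
        have h2 : (1:ℝ) ≤ 2^d * 2^(∑ j, β j) / n := by
          rw [le_div_iff₀ hn0]
          calc (1:ℝ) * n = n := one_mul _
          _ ≤ 2^(∑ j, β j) := hcondR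
          _ ≤ 2^d * 2^(∑ j, β j) :=
              le_mul_of_one_le_left (by positivity)
                (one_le_pow₀ (by norm_num : (1:ℝ) ≤ 2))
        have h3 : (2:ℝ)^(d+1+∑ j, β j) / n = 2^d * 2^(∑ j, β j) / n + 2^d * 2^(∑ j, β j) / n := by
          rw [pow_add, pow_add]
          ring
        rw [h3]
        linarith
      have hcardS : ((Nat.card ↥S : ℕ) : ℝ) ≤ (2:ℝ)^(d+1+∑ j, β j) / n := by
        have henc : S.encard = (S.ncard : ℕ∞) := (hSfin.cast_ncard_eq).symm
        rw [henc] at hboxS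
        rw [ENat.toENNReal_coe] at hboxS
        have hb2 : ((S.ncard : ℕ) : ℝ≥0∞) ≤ ENNReal.ofReal ((2:ℝ)^(d+1+∑ j, β j) / n) := by
          calc ((S.ncard : ℕ) : ℝ≥0∞) ≤ ENNReal.ofReal (∏ j, |xv j - yv j|) + 1 := hboxS
          _ = ENNReal.ofReal (∏ j, |xv j - yv j| + 1) := by
              rw [ENNReal.ofReal_add (Finset.prod_nonneg (fun j _ => abs_nonneg _)) zero_le_one,
                ENNReal.ofReal_one]
          _ ≤ _ := ENNReal.ofReal_le_ofReal hvol2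
        rw [← ENNReal.ofReal_natCast] at hb2
        rw [Nat.card_coe_set_eq]
        exact (ENNReal.ofReal_le_ofReal_iff (by positivity)).1 hb2
      -- put it together
      calc (∑' p : {m : {m : Fin d → ℤ // m ≠ 0} // φ m = β},
              ENNReal.ofReal ((hrw r (y p.1))⁻¹))
          ≤ (Nat.card ↥S : ℝ≥0∞) * ENNReal.ofReal (ρR (∑ j, β j)) := by
            apply aux_tsum_le _ _ G hGinj
            intro p
            apply ENNReal.ofReal_le_ofReal
            have h := hpoint p.1
            rw [p.2] at h
            exact h
      _ ≤ ENNReal.ofReal ((2:ℝ)^(d+1+∑ j, β j) / n) * ENNReal.ofReal (ρR (∑ j, β j)) := by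
            apply mul_le_mul_left
            rw [← ENNReal.ofReal_natCast]
            exact ENNReal.ofReal_le_ofReal hcardS
      _ = ENNReal.ofReal ((2:ℝ)^(d+1+∑ j, β j) / n * ρR (∑ j, β j)) :=
            (ENNReal.ofReal_mul (by positivity)).symm
      _ = ENNReal.ofReal (bndR (∑ j, β j)) := by
            rw [hbnddef]
            dsimp only
            rw [if_pos hcond]
    · rw [not_nonempty_iff] at hne
      have hz : (∑' p : {m : {m : Fin d → ℤ // m ≠ 0} // φ m = β},
          ENNReal.ofReal ((hrw r (y p.1))⁻¹)) = 0 :=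
        ENNReal.tsum_eq_zero.2 (fun p => (hne.false p).elim)
      rw [hz]
      exact zero_le
  -- second regrouping data
  set gR : ℕ → ℝ := fun s => ((s:ℝ)+1)^(d-1) * bndR s with hgdef
  have hcond2 : ∀ s, s₀ ≤ s → n ≤ 2^s := fun s hs =>
    (Nat.clog_le_iff_le_pow one_lt_two).1 hs
  have hgzero : ∀ s, s < s₀ → gR s = 0 := by
    intro s hs
    have hnot : ¬ (n ≤ 2^s) := by
      rw [← Nat.clog_le_iff_le_pow one_lt_two]
      omega
    rw [hgdef]
    dsimp only
    rw [hbnddef]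
    dsimp only
    rw [if_neg hnot, mul_zero]
  set AR : ℝ := ((s₀:ℝ)+1)^(d-1) * ((2:ℝ)^(d+1+s₀)/n * ρR s₀) with hARdef
  have hAR0 : 0 ≤ AR := by
    rw [hARdef]
    exact mul_nonneg (by positivity) (mul_nonneg (by positivity) (hρ0 s₀))
  have htail : ∀ t : ℕ, gR (s₀ + t) ≤ AR * (((t:ℝ)+1)^(d-1) * (1/2)^t) := by
    intro t
    have hcondt : n ≤ 2^(s₀+t) := hcond2 _ (by omega)
    have e1 : (2:ℝ)^(d+1+(s₀+t)) = 2^(d+1+s₀) * 2^t := by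
      rw [← pow_add]
      congr 1
      omega
    have e2 : ((2:ℝ)^(s₀+t))^(2*r) = ((2:ℝ)^s₀)^(2*r) * ((2:ℝ)^t)^(2*r) := by
      rw [pow_add, mul_pow]
    have A1 : ((s₀:ℝ)+(t:ℝ)+1)^(d-1) ≤ ((s₀:ℝ)+1)^(d-1) * ((t:ℝ)+1)^(d-1) := by
      rw [← mul_pow]
      apply pow_le_pow_left₀ (by positivity)
      nlinarith [Nat.cast_nonneg (α := ℝ) s₀, Nat.cast_nonneg (α := ℝ) t]
    have A2 : (2:ℝ)^t / ((2:ℝ)^t)^(2*r) ≤ (1/2:ℝ)^t := by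
      have h1 : ((1:ℝ)/2)^t = 1/2^t := by rw [div_pow, one_pow]
      rw [h1, div_le_div_iff₀ (by positivity) (by positivity)]
      calc (2:ℝ)^t * 2^t = ((2:ℝ)^t)^2 := (sq _).symm
      _ ≤ ((2:ℝ)^t)^(2*r) := pow_le_pow_right₀ (one_le_pow₀ (by norm_num)) (by omega)
      _ = 1 * ((2:ℝ)^t)^(2*r) := (one_mul _).symm
    calc gR (s₀+t)
        = ((s₀:ℝ)+(t:ℝ)+1)^(d-1) *
            (((2:ℝ)^t / ((2:ℝ)^t)^(2*r)) * ((2:ℝ)^(d+1+s₀)/n * ρR s₀)) := by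
          rw [hgdef]
          dsimp only
          rw [hbnddef]
          dsimp only
          rw [if_pos hcondt, hρdef]
          dsimp only
          rw [e1, e2]
          push_cast
          ring
    _ ≤ (((s₀:ℝ)+1)^(d-1) * ((t:ℝ)+1)^(d-1)) *
            (((1/2:ℝ))^t * ((2:ℝ)^(d+1+s₀)/n * ρR s₀)) := by
          apply mul_le_mul A1
            (mul_le_mul_of_nonneg_right A2 (mul_nonneg (by positivity) (hρ0 s₀)))
            (mul_nonneg (by positivity) (mul_nonneg (by positivity) (hρ0 s₀)))
            (by positivity)
    _ = AR * (((t:ℝ)+1)^(d-1) * (1/2:ℝ)^t) := by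
          rw [hARdef]
          ring
  -- final real inequality
  have hrpow : (n:ℝ) ^ (-(2:ℝ)*r) = ((n:ℝ)^(2*r))⁻¹ := by
    rw [show (-(2:ℝ)*r) = -(((2*r : ℕ) : ℝ)) by push_cast; ring]
    rw [Real.rpow_neg (le_of_lt hn0), Real.rpow_natCast]
  have hlog2 : (0:ℝ) < Real.log 2 := Real.log_pos one_lt_two
  have hlogn : Real.log 2 ≤ Real.log n := Real.log_le_log (by norm_num) hn2
  have hlognn : (0:ℝ) ≤ Real.log n := le_trans (le_of_lt hlog2) hlogn
  have hs₀le : ((s₀:ℝ)+1) ≤ 3 / Real.log 2 * Real.log n := by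
    have h1 : (2:ℕ)^(s₀-1) < n := Nat.pow_pred_clog_lt_self one_lt_two hn
    have h2 : ((2:ℝ))^(s₀-1 : ℕ) < n := by exact_mod_cast h1
    have h3 := Real.log_lt_log (by positivity) h2
    rw [Real.log_pow] at h3
    have h4 : ((s₀:ℝ) - 1) * Real.log 2 < Real.log n := by
      have hc : ((s₀ - 1 : ℕ) : ℝ) = (s₀:ℝ) - 1 := by
        rw [Nat.cast_sub hs₀pos]
        norm_num
      rwa [hc] at h3
    have h6 : (s₀:ℝ) - 1 < Real.log n / Real.log 2 := by
      rw [lt_div_iff₀ hlog2]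
      linarith
    have h7 : (1:ℝ) ≤ Real.log n / Real.log 2 := (one_le_div hlog2).2 hlogn
    have h8 : 3 / Real.log 2 * Real.log n = 3 * (Real.log n / Real.log 2) := by ring
    rw [h8]
    linarith
  have hmid : (2:ℝ)^(d+1+s₀)/n * ρR s₀ ≤ 2^(d+2+2*r*d) * ((n:ℝ)^(2*r))⁻¹ := by
    rw [hρdef]
    dsimp only
    have eP : ((2:ℝ)^d)^(2*r) = 2^(2*r*d) := by
      rw [← pow_mul]
      congr 1
      ring
    have e1 : (2:ℝ)^(d+1+s₀) = 2^(d+1) * 2^s₀ := by rw [pow_add]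
    have e2 : ((2:ℝ)^s₀)^(2*r) = 2^s₀ * ((2:ℝ)^s₀)^(2*r-1) := by
      rw [← pow_succ']
      congr 1
      omega
    have e3 : (2:ℝ)^(d+2+2*r*d) = 2^(d+1) * 2 * 2^(2*r*d) := by
      rw [pow_add, pow_add]
      ring
    have h4 : (n:ℝ)^(2*r-1) ≤ ((2:ℝ)^s₀)^(2*r-1) :=
      pow_le_pow_left₀ (le_of_lt hn0) hnpow _
    have h5 : (n:ℝ)^(2*r) = n * (n:ℝ)^(2*r-1) := by
      rw [← pow_succ']
      congr 1
      omega
    rw [eP, e1, e2, e3, h5, div_mul_div_comm, ← div_eq_mul_inv,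
      div_le_div_iff₀ (by positivity) (by positivity)]
    have key1 : (2^(d+1) * 2^(2*r*d) * n * 2^s₀) * (n:ℝ)^(2*r-1)
        ≤ (2^(d+1) * 2^(2*r*d) * n * 2^s₀) * ((2:ℝ)^s₀)^(2*r-1) :=
      mul_le_mul_of_nonneg_left h4 (by positivity)
    have key2 : (2^(d+1) * 2^(2*r*d) * n * 2^s₀) * ((2:ℝ)^s₀)^(2*r-1)
        ≤ 2 * ((2^(d+1) * 2^(2*r*d) * n * 2^s₀) * ((2:ℝ)^s₀)^(2*r-1)) :=
      le_mul_of_one_le_left (by positivity) one_le_two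
    calc 2^(d+1) * 2^s₀ * 2^(2*r*d) * ((n:ℝ) * (n:ℝ)^(2*r-1))
        = (2^(d+1) * 2^(2*r*d) * n * 2^s₀) * (n:ℝ)^(2*r-1) := by ring
    _ ≤ 2 * ((2^(d+1) * 2^(2*r*d) * n * 2^s₀) * ((2:ℝ)^s₀)^(2*r-1)) := le_trans key1 key2
    _ = 2^(d+1) * 2 * 2^(2*r*d) * ((n:ℝ) * (2^s₀ * ((2:ℝ)^s₀)^(2*r-1))) := by ring
  have hfinal : AR * Kr ≤ (c0+1) * (n:ℝ)^(-(2:ℝ)*r) * Real.log n ^ (d-1) := by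
    rw [hrpow]
    have hstep1 : ((s₀:ℝ)+1)^(d-1) ≤ (3/Real.log 2)^(d-1) * Real.log n ^ (d-1) := by
      rw [← mul_pow]
      exact pow_le_pow_left₀ (by positivity) hs₀le _
    have hARle : AR ≤ (3/Real.log 2)^(d-1) * Real.log n ^ (d-1)
        * (2^(d+2+2*r*d) * ((n:ℝ)^(2*r))⁻¹) := by
      rw [hARdef]
      apply mul_le_mul hstep1 hmid (mul_nonneg (by positivity) (hρ0 s₀))
      positivity
    have hX : (0:ℝ) ≤ ((n:ℝ)^(2*r))⁻¹ * Real.log n ^ (d-1) :=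
      mul_nonneg (by positivity) (pow_nonneg hlognn _)
    calc AR * Kr
        ≤ ((3/Real.log 2)^(d-1) * Real.log n ^ (d-1)
            * (2^(d+2+2*r*d) * ((n:ℝ)^(2*r))⁻¹)) * Kr :=
          mul_le_mul_of_nonneg_right hARle hKr0
    _ = c0 * (((n:ℝ)^(2*r))⁻¹ * Real.log n ^ (d-1)) := by
          rw [hc0]
          ring
    _ ≤ (c0+1) * (((n:ℝ)^(2*r))⁻¹ * Real.log n ^ (d-1)) := by nlinarith
    _ = (c0+1) * ((n:ℝ)^(2*r))⁻¹ * Real.log n ^ (d-1) := by ring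
  -- assemble
  have main : (∑' m : {m : Fin d → ℤ // m ≠ 0}, ENNReal.ofReal ((hrw r (y m))⁻¹))
      ≤ ENNReal.ofReal ((c0+1) * (n:ℝ)^(-(2:ℝ)*r) * Real.log n ^ (d-1)) := by
    calc (∑' m : {m : Fin d → ℤ // m ≠ 0}, ENNReal.ofReal ((hrw r (y m))⁻¹))
        = ∑' β : Fin d → ℕ, ∑' p : {m : {m : Fin d → ℤ // m ≠ 0} // φ m = β},
            ENNReal.ofReal ((hrw r (y p.1))⁻¹) :=
          aux_regroup φ (fun m => ENNReal.ofReal ((hrw r (y m))⁻¹))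
    _ ≤ ∑' β : Fin d → ℕ, ENNReal.ofReal (bndR (∑ j, β j)) :=
          ENNReal.tsum_le_tsum hfiber
    _ = ∑' s : ℕ, ∑' q : {β : Fin d → ℕ // (∑ j, β j) = s},
            ENNReal.ofReal (bndR (∑ j, q.1 j)) :=
          aux_regroup (fun β : Fin d → ℕ => ∑ j, β j)
            (fun β => ENNReal.ofReal (bndR (∑ j, β j)))
    _ ≤ ∑' s : ℕ, ENNReal.ofReal (gR s) := by
          apply ENNReal.tsum_le_tsum
          intro s
          have hfin := aux_finite_simplex d s
          calc ∑' q : {β : Fin d → ℕ // (∑ j, β j) = s},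
                ENNReal.ofReal (bndR (∑ j, q.1 j))
              ≤ (((s+1)^(d-1) : ℕ) : ℝ≥0∞) * ENNReal.ofReal (bndR s) :=
                aux_tsum_card _ _ _ (aux_card_simplex d s hd) (fun q => by rw [q.2])
          _ = ENNReal.ofReal (gR s) := by
                rw [← ENNReal.ofReal_natCast, ← ENNReal.ofReal_mul (by positivity), hgdef]
                dsimp only
                congr 1
                push_cast
                ring
    _ = ∑' t : ℕ, ENNReal.ofReal (gR (s₀ + t)) := by
          symm
          apply Function.Injective.tsum_eq (f := fun s : ℕ => ENNReal.ofReal (gR s))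
            (g := fun t : ℕ => s₀ + t) (fun t t' h => by simp only [add_right_inj] at h; exact h)
          intro s hs
          rcases lt_or_ge s s₀ with h | h
          · exfalso
            rw [Function.mem_support] at hs
            exact hs (by rw [hgzero s h, ENNReal.ofReal_zero])
          · exact ⟨s - s₀, by show s₀ + (s - s₀) = s; omega⟩
    _ ≤ ∑' t : ℕ, ENNReal.ofReal (AR * (((t:ℝ)+1)^(d-1) * (1/2:ℝ)^t)) :=
          ENNReal.tsum_le_tsum (fun t => ENNReal.ofReal_le_ofReal (htail t))
    _ = ENNReal.ofReal (AR * Kr) := by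
          rw [← ENNReal.ofReal_tsum_of_nonneg
            (fun t => mul_nonneg hAR0 (by positivity)) (hsumK.mul_left AR)]
          congr 1
          rw [tsum_mul_left]
    _ ≤ ENNReal.ofReal ((c0+1) * (n:ℝ)^(-(2:ℝ)*r) * Real.log n ^ (d-1)) :=
          ENNReal.ofReal_le_ofReal hfinal
  exact main
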